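/- Let κ be a regular cardinal and κ ≥ λ ≥ μ ≥ ν. Let Q be a directed set with calibre (κ,λ), and let P be a directed set covered by a Q-ordered family {P_q : q ∈ Q} of subsets (i.e., P = ⋃_{q∈Q} P_q and P_q ⊆ P_{q'} whenever q ≤ q' in Q) such that each P_q has relative calibre (μ,ν) in P. Then P has calibre (κ,λ,μ,ν). -/
import Mathlib


open Cardinal Set

/-- A directed set `P` has calibre `(κ,λ,μ,ν)` if every `κ`-sized subset of `P`
has a `λ`-sized subset `T` such that every `μ`-sized subset of `T` has a
`ν`-sized subset bounded in `P`. -/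
def Calibre (P : Type u) [Preorder P] (κ l m n : Cardinal.{u}) : Prop :=
  ∀ S : Set P, #S = κ → ∃ T ⊆ S, #T = l ∧
    ∀ U ⊆ T, #U = m → ∃ V ⊆ U, #V = n ∧ BddAbove V

/-- if `Q` has calibre `(κ,λ)`, `κ` regular, `κ ≥ λ ≥ μ ≥ ν`, and
`P` is covered by a `Q`-ordered family of subsets each of relative calibre
`(μ,ν)` in `P`, then `P` has calibre `(κ,λ,μ,ν)`. -/
theorem calibre_types {Q : Type u} {P : Type u} [PartialOrder Q] [PartialOrder P]
    (hQdir : ∀ F : Set Q, F.Finite → BddAbove F)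
    (hPdir : ∀ F : Set P, F.Finite → BddAbove F)
    (κ l m n : Cardinal.{u}) (hreg : κ.IsRegular)
    (hlκ : l ≤ κ) (hml : m ≤ l) (hnm : n ≤ m)
    (hQcal : Calibre Q κ l l l)
    (Pq : Q → Set P) (hcover : (⋃ q, Pq q) = Set.univ)
    (hmono : ∀ q q' : Q, q ≤ q' → Pq q ⊆ Pq q')
    (hrel : ∀ q : Q, ∀ U ⊆ Pq q, #U = m → ∃ V ⊆ U, #V = n ∧ BddAbove V) :
    Calibre P κ l m n := by
  intro S hS
  have hex : ∀ p : P, ∃ q, p ∈ Pq q := by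
    intro p
    have : p ∈ ⋃ q, Pq q := by rw [hcover]; trivial
    simpa using this
  choose f hf using hex
  have key : ∃ q : Q, l ≤ #(S ∩ Pq q : Set P) := by
    by_cases hA : #(f '' S) < κ
    · by_contra hcon
      push_neg at hcon
      have hfib : ∀ q : (f '' S : Set Q), #({s ∈ S | f s = (q : Q)} : Set P) < κ := by
        intro q
        have hsub : {s ∈ S | f s = (q : Q)} ⊆ S ∩ Pq q := by
          rintro s ⟨hs, hfs⟩
          exact ⟨hs, hfs ▸ hf s⟩
        calc #({s ∈ S | f s = (q : Q)} : Set P) ≤ #(S ∩ Pq (q : Q) : Set P) :=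
              mk_le_mk_of_subset hsub
          _ < l := hcon _
          _ ≤ κ := hlκ
      have hcov : S ⊆ ⋃ q : (f '' S : Set Q), {s ∈ S | f s = (q : Q)} := by
        intro s hs
        exact mem_iUnion.2 ⟨⟨f s, mem_image_of_mem f hs⟩, hs, rfl⟩
      have : #S < κ := by
        calc #S ≤ #(⋃ q : (f '' S : Set Q), {s ∈ S | f s = (q : Q)} : Set P) :=
              mk_le_mk_of_subset hcov
          _ ≤ Cardinal.sum fun q : (f '' S : Set Q) => #({s ∈ S | f s = (q : Q)} : Set P) :=
              mk_iUnion_le_sum_mk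
          _ < κ := sum_lt_of_isRegular hreg hA hfib
      exact absurd hS this.ne
    · have hAκ : #(f '' S) = κ := le_antisymm (hS ▸ mk_image_le) (not_lt.1 hA)
      obtain ⟨T, hTsub, hTcard, hT⟩ := hQcal (f '' S) hAκ
      obtain ⟨V, hVsub, hVcard, qstar, hqstar⟩ := hT T subset_rfl hTcard
      refine ⟨qstar, ?_⟩
      have : ∀ q : V, ∃ s, s ∈ S ∧ f s = (q : Q) := by
        intro q
        obtain ⟨s, hs, hfs⟩ := hTsub (hVsub q.2)
        exact ⟨s, hs, hfs⟩
      choose g hgS hgf using this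
      have hg : ∀ q : V, g q ∈ (S ∩ Pq qstar : Set P) := by
        intro q
        refine ⟨hgS q, hmono _ _ (hqstar q.2) ?_⟩
        have := hf (g q)
        rwa [hgf q] at this
      have hinj : Function.Injective fun q : V => (⟨g q, hg q⟩ : (S ∩ Pq qstar : Set P)) := by
        intro a b hab
        have : g a = g b := congrArg Subtype.val hab
        have : f (g a) = f (g b) := congrArg f this
        rw [hgf a, hgf b] at this
        exact Subtype.ext this
      calc l = #V := hVcard.symm
        _ ≤ #(S ∩ Pq qstar : Set P) := mk_le_of_injective hinj
  obtain ⟨qstar, hq⟩ := key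
  obtain ⟨T, hTsub, hTcard⟩ := le_mk_iff_exists_subset.1 hq
  refine ⟨T, fun x hx => (hTsub hx).1, hTcard, fun U hU hUcard => ?_⟩
  exact hrel qstar U (fun x hx => (hTsub (hU hx)).2) hUcard
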